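/- Imaginary-time conjugation bound for local operators: let H = ∑_X h_X be a Hamiltonian on n qudits in which every term h_X is Hermitian and supported on a set X of at most k sites, with max_i ∑_{X∋i} ‖h_X‖ ≤ g. Then for every operator O_S supported on a set S of sites and every β ≥ 0 with 2gkβ < 1, one has ‖e^{−βH} O_S e^{βH}‖ ≤ ‖O_S‖ · (1 − 2gkβ)^{−|S|/k}. -/

import Mathlib

open scoped BigOperators

namespace Paper

variable {ι : Type*} [Fintype ι] [DecidableEq ι] {d : ℕ}

/-- The space of operators on a system of qudits indexed by `ι`, each of local dimension `d`. -/
abbrev Op (ι : Type*) [Fintype ι] [DecidableEq ι] (d : ℕ) : Type _ :=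
  Matrix (ι → Fin d) (ι → Fin d) ℂ

open Classical in
/-- `A` acts as the identity on all sites outside `X`. -/
def SupportedOn (X : Set ι) (A : Op ι d) : Prop :=
  ∃ B : Matrix (X → Fin d) (X → Fin d) ℂ,
    ∀ i j : ι → Fin d,
      A i j = if ∀ x ∉ X, i x = j x then B (fun x => i x.1) (fun x => j x.1) else 0

/-- Operator norm of a matrix, i.e. the norm as an operator on Euclidean space. -/
noncomputable def opNorm {m : Type*} [Fintype m] [DecidableEq m] (A : Matrix m m ℂ) : ℝ :=
  ‖Matrix.toEuclideanCLM (𝕜 := ℂ) A‖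

/-- Schatten `p`-norm `(Tr ((A† A)^{p/2}))^{1/p}` of a matrix. -/
noncomputable def schattenNorm {m : Type*} [Fintype m] [DecidableEq m] (p : ℝ)
    (A : Matrix m m ℂ) : ℝ :=
  (∑ i, (Matrix.isHermitian_conjTranspose_mul_self A).eigenvalues i ^ (p / 2)) ^ (1 / p)

/-- Matrix exponential. -/
noncomputable def mexp {m : Type*} [Fintype m] [DecidableEq m] (A : Matrix m m ℂ) :
    Matrix m m ℂ :=
  NormedSpace.exp A

/-- The Gibbs state `e^{-βH} / Tr e^{-βH}`. -/
noncomputable def gibbs (β : ℝ) (H : Op ι d) : Op ι d :=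
  (Matrix.trace (mexp ((-(β : ℂ)) • H)))⁻¹ • mexp ((-(β : ℂ)) • H)

/-- Reduced density matrix on the sites in `L` (partial trace over the complement). -/
noncomputable def restrictOut (L : Finset ι) (ρ : Op ι d) :
    Matrix ({x // x ∈ L} → Fin d) ({x // x ∈ L} → Fin d) ℂ :=
  Matrix.of fun a b =>
    ∑ c : {x // x ∉ L} → Fin d,
      ρ (fun x => if h : x ∈ L then a ⟨x, h⟩ else c ⟨x, h⟩)
        (fun x => if h : x ∈ L then b ⟨x, h⟩ else c ⟨x, h⟩)

open Classical in
/-- Von Neumann entropy `-Tr ρ log ρ` (via eigenvalues; junk value for non-Hermitian input). -/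
noncomputable def vnEntropy {m : Type*} [Fintype m] [DecidableEq m] (ρ : Matrix m m ℂ) : ℝ :=
  if h : ρ.IsHermitian then -∑ i, h.eigenvalues i * Real.log (h.eigenvalues i) else 0

open Classical in
/-- Rényi-`α` entropy; for `α = 1` this is the von Neumann entropy. -/
noncomputable def renyiEntropy {m : Type*} [Fintype m] [DecidableEq m] (α : ℝ)
    (ρ : Matrix m m ℂ) : ℝ :=
  if h : ρ.IsHermitian then
    if α = 1 then -∑ i, h.eigenvalues i * Real.log (h.eigenvalues i)
    else (1 - α)⁻¹ * Real.log (∑ i, h.eigenvalues i ^ α)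
  else 0

/-- Mutual information `S(ρ_L) + S(ρ_{Lᶜ}) - S(ρ)` for the bipartition `L ⊔ Lᶜ`. -/
noncomputable def mutualInfo (L : Finset ι) (ρ : Op ι d) : ℝ :=
  vnEntropy (restrictOut L ρ) + vnEntropy (restrictOut Lᶜ ρ) - vnEntropy ρ

/-- `O` admits a Schmidt decomposition with `m` terms across the bipartition
`Lset ⊔ Lsetᶜ`; i.e. the Schmidt rank of `O` across this cut is at most `m`. -/
def SchmidtDecompSet (Lset : Set ι) (O : Op ι d) (m : ℕ) : Prop :=
  ∃ A B : Fin m → Op ι d,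
    (∀ s, SupportedOn Lset (A s)) ∧ (∀ s, SupportedOn Lsetᶜ (B s)) ∧ O = ∑ s, A s * B s

/-- Schmidt decomposition across the cut `{1,…,i} | {i+1,…,n}` of a chain
(`0`-indexed: left part is the sites `< i`). -/
def SchmidtDecomp {n : ℕ} (i : ℕ) (O : Op (Fin n) d) (m : ℕ) : Prop :=
  SchmidtDecompSet {x : Fin n | (x : ℕ) < i} O m

/-- A function of the configuration of all sites depends only on the sites in `Lset`. -/
def DependsOnlyOn (Lset : Set ι) (f : (ι → Fin d) → ℂ) : Prop :=
  ∀ u v : ι → Fin d, (∀ x ∈ Lset, u x = v x) → f u = f v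

/-- Schmidt decomposition with `m` terms of a vector across the bipartition `Lset ⊔ Lsetᶜ`. -/
def VecSchmidtDecomp (Lset : Set ι) (ψ : (ι → Fin d) → ℂ) (m : ℕ) : Prop :=
  ∃ a b : Fin m → ((ι → Fin d) → ℂ),
    (∀ s, DependsOnlyOn Lset (a s)) ∧ (∀ s, DependsOnlyOn Lsetᶜ (b s)) ∧
      ∀ u, ψ u = ∑ s, a s u * b s u

/-- The rank-one density matrix `|ψ⟩⟨ψ|`. -/
noncomputable def pureDM (ψ : (ι → Fin d) → ℂ) : Op ι d :=
  Matrix.of fun u v => ψ u * (starRingEnd ℂ) (ψ v)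

/-- A nearest-neighbour Hamiltonian on a chain of `n` qudits: `h i` is the interaction
between sites `i` and `i+1` (`0`-indexed), and
`‖h_{i-1,i}‖ + ‖h_{i,i+1}‖ ≤ 1` for every site `i`. -/
structure NNChain (n d : ℕ) where
  h : ℕ → Op (Fin n) d
  supported : ∀ i : ℕ, SupportedOn {x : Fin n | (x : ℕ) = i ∨ (x : ℕ) = i + 1} (h i)
  hermitian : ∀ i : ℕ, (h i).IsHermitian
  norm_le : ∀ i : ℕ, 1 ≤ i → opNorm (h (i - 1)) + opNorm (h i) ≤ 1

/-- The Hamiltonian `H = ∑_{i=1}^{n-1} h_{i,i+1}` of a nearest-neighbour chain. -/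
noncomputable def NNChain.H {n d : ℕ} (C : NNChain n d) : Op (Fin n) d :=
  ∑ i ∈ Finset.range (n - 1), C.h i

/-- A `k`-local Hamiltonian on a chain of `n` qudits with interaction strength `g`:
a collection of Hermitian terms `h X` supported on sets `X` of diameter at most `k`,
with `∑_{X ∋ i} ‖h X‖ ≤ g` for every site `i`. -/
structure KLocal (n d k : ℕ) (g : ℝ) where
  h : Finset (Fin n) → Op (Fin n) d
  supported : ∀ X : Finset (Fin n), SupportedOn (X : Set (Fin n)) (h X)
  hermitian : ∀ X : Finset (Fin n), (h X).IsHermitian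
  diam_le : ∀ X : Finset (Fin n), h X ≠ 0 → ∀ x ∈ X, ∀ y ∈ X, (y : ℕ) < (x : ℕ) + k
  strength : ∀ i : Fin n,
    ∑ X ∈ Finset.univ.filter (fun X : Finset (Fin n) => i ∈ X), opNorm (h X) ≤ g
  empty_zero : h ∅ = 0

/-- The full Hamiltonian `H = ∑_X h_X` of a `k`-local chain. -/
noncomputable def KLocal.H {n d k : ℕ} {g : ℝ} (C : KLocal n d k g) : Op (Fin n) d :=
  ∑ X : Finset (Fin n), C.h X


set_option linter.unusedSectionVars false
set_option maxHeartbeats 2000000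

section AuxAlgebra

open NormedSpace

variable {A : Type*} [NormedRing A] [NormedAlgebra ℂ A] [CompleteSpace A]

noncomputable def lmul (a : A) : A →L[ℂ] A := ContinuousLinearMap.mul ℂ A a
noncomputable def rmul (a : A) : A →L[ℂ] A := (ContinuousLinearMap.mul ℂ A).flip a

@[simp] lemma lmul_apply (a b : A) : lmul a b = a * b := rfl
@[simp] lemma rmul_apply (a b : A) : rmul a b = b * a := rfl

lemma exp_apply_eq_tsum (T : A →L[ℂ] A) (b : A) :
    exp T b = ∑' n : ℕ, (n.factorial⁻¹ : ℂ) • (T ^ n) b := by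
  have hs : Summable fun n : ℕ => (n.factorial⁻¹ : ℂ) • T ^ n := expSeries_summable' T
  have h1 : exp T = ∑' n : ℕ, (n.factorial⁻¹ : ℂ) • T ^ n := by rw [exp_eq_tsum ℂ]
  rw [h1]
  have := (ContinuousLinearMap.apply ℂ A b).map_tsum hs
  simpa using this

lemma lmul_pow (a : A) (n : ℕ) : (lmul a) ^ n = lmul (a ^ n) := by
  induction n with
  | zero => ext b; simp
  | succ n ih => ext b; simp [pow_succ, ih, mul_assoc]

lemma rmul_pow (a : A) (n : ℕ) : (rmul a) ^ n = rmul (a ^ n) := by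
  induction n with
  | zero => ext b; simp
  | succ n ih =>
    ext b
    simp only [ContinuousLinearMap.mul_apply, pow_succ, rmul_apply, ih]
    rw [mul_assoc, ← pow_succ', ← pow_succ]

lemma exp_lmul (a b : A) : exp (lmul a) b = exp a * b := by
  have hs : Summable fun n : ℕ => (n.factorial⁻¹ : ℂ) • a ^ n := expSeries_summable' a
  have hexp : exp a = ∑' n : ℕ, (n.factorial⁻¹ : ℂ) • a ^ n := by rw [exp_eq_tsum ℂ]
  rw [exp_apply_eq_tsum]
  simp_rw [lmul_pow, lmul_apply, ← smul_mul_assoc]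
  rw [hs.tsum_mul_right, ← hexp]

lemma exp_rmul (a b : A) : exp (rmul a) b = b * exp a := by
  have hs : Summable fun n : ℕ => (n.factorial⁻¹ : ℂ) • a ^ n := expSeries_summable' a
  have hexp : exp a = ∑' n : ℕ, (n.factorial⁻¹ : ℂ) • a ^ n := by rw [exp_eq_tsum ℂ]
  rw [exp_apply_eq_tsum]
  simp_rw [rmul_pow, rmul_apply, ← mul_smul_comm]
  rw [hs.tsum_mul_left, ← hexp]

lemma commute_lmul_rmul' (x y : A) : Commute (lmul x) (rmul y) := by
  ext b; simp [mul_assoc, ContinuousLinearMap.mul_apply]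

lemma smul_pow_apply (c : ℂ) (T : A →L[ℂ] A) (m : ℕ) (b : A) :
    ((c • T) ^ m) b = c ^ m • (T ^ m) b := by
  induction m generalizing b with
  | zero => simp
  | succ m ih =>
    have h1 : ((c • T) ^ (m+1)) b = ((c • T) ^ m) ((c • T) b) := by
      rw [pow_succ, ContinuousLinearMap.mul_apply]
    have h2 : (T ^ (m+1)) b = (T ^ m) (T b) := by
      rw [pow_succ, ContinuousLinearMap.mul_apply]
    rw [h1, h2, ContinuousLinearMap.smul_apply, map_smul, ih, smul_smul, ← pow_succ']

lemma exp_conj_eq (H O : A) (β : ℝ) :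
    exp ((-(β:ℂ)) • H) * O * exp ((β:ℂ) • H) =
      ∑' m : ℕ, (m.factorial⁻¹ : ℂ) • ((β:ℂ) ^ m • ((rmul H - lmul H) ^ m) O) := by
  have key : exp (lmul ((-(β:ℂ)) • H) + rmul ((β:ℂ) • H)) O
      = exp ((-(β:ℂ)) • H) * O * exp ((β:ℂ) • H) := by
    letI : NormedAlgebra ℚ (A →L[ℂ] A) := .restrictScalars ℚ ℂ (A →L[ℂ] A)
    rw [exp_add_of_commute (commute_lmul_rmul' _ _)]
    rw [ContinuousLinearMap.mul_apply, exp_lmul, exp_rmul, mul_assoc]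
  rw [← key, exp_apply_eq_tsum]
  have hD : lmul ((-(β:ℂ)) • H) + rmul ((β:ℂ) • H) = (β:ℂ) • (rmul H - lmul H) := by
    ext b
    show (-(β:ℂ) • H) * b + b * ((β:ℂ) • H) = (β:ℂ) • (b * H - H * b)
    rw [neg_smul, neg_mul, smul_mul_assoc, mul_smul_comm, smul_sub]
    abel
  rw [hD]
  congr 1; ext m
  rw [smul_pow_apply]

end AuxAlgebra

section AuxBinomial

open Filter Topology
open Filter Topology

noncomputable def bc (a : ℝ) (m : ℕ) : ℝ := (∏ j ∈ Finset.range m, (a + j)) / m.factorial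

lemma bc_zero (a : ℝ) : bc a 0 = 1 := by simp [bc]

lemma bc_nonneg {a : ℝ} (ha : 0 ≤ a) (m : ℕ) : 0 ≤ bc a m := by
  apply div_nonneg
  · exact Finset.prod_nonneg fun j _ => by positivity
  · positivity

lemma bc_succ (a : ℝ) (m : ℕ) : bc a (m + 1) = bc a m * (a + m) / (m + 1) := by
  simp only [bc, Finset.prod_range_succ, Nat.factorial_succ]
  have h1 : (m : ℝ) + 1 ≠ 0 := by positivity
  have h2 : (m.factorial : ℝ) ≠ 0 := Nat.cast_ne_zero.2 m.factorial_ne_zero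
  push_cast
  field_simp

/-- generic ratio test for `c m * r ^ m` with `c (m+1) = c m * q m`, `q → 1`. -/
lemma summable_ratio_aux (c q : ℕ → ℝ) (hc : ∀ m, 0 ≤ c m)
    (hcq : ∀ m, c (m + 1) = c m * q m) (hq : Tendsto q atTop (𝓝 1))
    {r : ℝ} (hr0 : 0 ≤ r) (hr : r < 1) :
    Summable fun m => c m * r ^ m := by
  set r' : ℝ := max r (1/2) with hr'def
  have hr'0 : 0 < r' := lt_of_lt_of_le (by norm_num) (le_max_right _ _)
  have hr'1 : r' < 1 := max_lt hr (by norm_num)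
  have hcomp : ∀ m, c m * r ^ m ≤ c m * r' ^ m := fun m =>
    mul_le_mul_of_nonneg_left (pow_le_pow_left₀ hr0 (le_max_left _ _) m) (hc m)
  have hnn : ∀ m, 0 ≤ c m * r ^ m := fun m => mul_nonneg (hc m) (pow_nonneg hr0 m)
  refine Summable.of_nonneg_of_le hnn hcomp ?_
  set l : ℝ := (1 + r') / 2 with hldef
  have hl1 : l < 1 := by rw [hldef]; linarith
  have hrl : r' < l := by rw [hldef]; linarith
  apply summable_of_ratio_norm_eventually_le hl1
  have hlr : 1 < l / r' := (one_lt_div hr'0).2 hrl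
  have hev : ∀ᶠ m in atTop, q m < l / r' := hq.eventually_lt_const hlr
  filter_upwards [hev] with m hm
  have h1 : 0 ≤ c m * r' ^ m := mul_nonneg (hc m) (pow_nonneg hr'0.le m)
  have h2 : 0 ≤ c (m+1) * r' ^ (m+1) := mul_nonneg (hc (m+1)) (pow_nonneg hr'0.le (m+1))
  rw [Real.norm_eq_abs, Real.norm_eq_abs, abs_of_nonneg h1, abs_of_nonneg h2, hcq]
  have : c m * q m * r' ^ (m + 1) ≤ c m * (l / r') * r' ^ (m+1) := by
    apply mul_le_mul_of_nonneg_right _ (pow_nonneg hr'0.le _)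
    exact mul_le_mul_of_nonneg_left hm.le (hc m)
  refine this.trans (le_of_eq ?_)
  rw [pow_succ]
  field_simp

lemma tendsto_aux (b : ℝ) : Tendsto (fun m : ℕ => 1 + b / (m + 1)) atTop (𝓝 1) := by
  have h := tendsto_one_div_add_atTop_nhds_zero_nat.const_mul b
  simp only [mul_zero] at h
  have h2 : Tendsto (fun m : ℕ => 1 + b * (1 / (m + 1))) atTop (𝓝 (1 + 0)) :=
    tendsto_const_nhds.add h
  simp only [add_zero] at h2
  convert h2 using 2 with m
  rw [mul_one_div]

lemma summable_bc (a : ℝ) (ha : 0 ≤ a) {r : ℝ} (hr0 : 0 ≤ r) (hr : r < 1) :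
    Summable fun m => bc a m * r ^ m := by
  refine summable_ratio_aux (bc a) (fun m => 1 + (a - 1) / (m + 1)) (bc_nonneg ha) ?_
    (tendsto_aux _) hr0 hr
  intro m
  have hm : (m : ℝ) + 1 ≠ 0 := by positivity
  rw [bc_succ]
  field_simp
  ring

lemma summable_bc_deriv (a : ℝ) (ha : 0 ≤ a) {r : ℝ} (hr0 : 0 ≤ r) (hr : r < 1) :
    Summable fun m => (bc a m * (m + 1)) * r ^ m := by
  refine summable_ratio_aux (fun m => bc a m * (m + 1))
    (fun m => (1 + (a-1)/(m+1)) * (1 + 1/(m+1)))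
    (fun m => mul_nonneg (bc_nonneg ha m) (by positivity)) ?_ ?_ hr0 hr
  · intro m
    have hm : (m : ℝ) + 1 ≠ 0 := by positivity
    rw [bc_succ]
    push_cast
    field_simp
    ring
  · have := (tendsto_aux (a-1)).mul (tendsto_aux 1)
    simpa using this

lemma tsum_bc_zero (a : ℝ) : ∑' m : ℕ, bc a m * (0:ℝ) ^ m = 1 := by
  rw [tsum_eq_single 0]
  · simp [bc_zero]
  · intro m hm
    simp [zero_pow hm]

theorem hasSum_bc (a : ℝ) (ha : 0 ≤ a) {x : ℝ} (hx0 : 0 ≤ x) (hx : x < 1) :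
    HasSum (fun m : ℕ => bc a m * x ^ m) ((1 - x) ^ (-a)) := by
  have hsum := summable_bc a ha hx0 hx
  suffices htsum : ∑' m : ℕ, bc a m * x ^ m = (1 - x) ^ (-a) by
    rw [← htsum]; exact hsum.hasSum
  -- setup open interval
  obtain ⟨r, hxr, hr0, hr1⟩ : ∃ r : ℝ, x < r ∧ 0 < r ∧ r < 1 :=
    ⟨(1 + x) / 2, by linarith, by linarith, by linarith⟩
  set t : Set ℝ := Set.Ioo (-r) r with htdef
  have ht : IsOpen t := isOpen_Ioo
  have h't : IsPreconnected t := (convex_Ioo _ _).isPreconnected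
  set f : ℝ → ℝ := fun y => ∑' m : ℕ, bc a m * y ^ m with hfdef
  set g : ℕ → ℝ → ℝ := fun m y => bc a m * y ^ m with hgdef
  set g' : ℕ → ℝ → ℝ := fun m y => bc a m * (m * y ^ (m - 1)) with hg'def
  set u : ℕ → ℝ := fun m => (bc a m * (m + 1) * r ^ m) / r with hudef
  have hu : Summable u := (summable_bc_deriv a ha hr0.le hr1).div_const r
  have hg : ∀ m y, y ∈ t → HasDerivAt (g m) (g' m y) y := by
    intro m y _
    exact (hasDerivAt_pow m y).const_mul (bc a m)
  have hg' : ∀ m y, y ∈ t → ‖g' m y‖ ≤ u m := by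
    intro m y hy
    have hyr : |y| ≤ r := by
      rw [abs_le]; exact ⟨(hy.1).le, (hy.2).le⟩
    have h1 : ‖g' m y‖ = bc a m * (m * |y| ^ (m - 1)) := by
      rw [hg'def, Real.norm_eq_abs, abs_mul, abs_of_nonneg (bc_nonneg ha m), abs_mul,
        Nat.abs_cast, abs_pow]
    rw [h1, hudef]
    cases m with
    | zero =>
      simp only [Nat.cast_zero, zero_mul, mul_zero, Nat.cast_ofNat]
      apply div_nonneg _ hr0.le
      exact mul_nonneg (mul_nonneg (bc_nonneg ha 0) (by norm_num)) (pow_nonneg hr0.le 0)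
    | succ m =>
      simp only [Nat.add_sub_cancel]
      have hpow : |y| ^ m ≤ r ^ m := pow_le_pow_left₀ (abs_nonneg y) hyr m
      have hru : bc a (m+1) * (↑(m+1) + 1) * r ^ (m+1) / r = bc a (m+1) * ((↑(m+1) + 1) * r ^ m) := by
        rw [pow_succ]
        field_simp
      rw [hru]
      have step1 : bc a (m+1) * ((m+1 : ℕ) * |y| ^ m) ≤ bc a (m+1) * ((↑(m+1) : ℝ) * r ^ m) := by
        apply mul_le_mul_of_nonneg_left _ (bc_nonneg ha _)
        exact mul_le_mul_of_nonneg_left hpow (by positivity)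
      refine step1.trans ?_
      apply mul_le_mul_of_nonneg_left _ (bc_nonneg ha _)
      apply mul_le_mul_of_nonneg_right _ (pow_nonneg hr0.le m)
      push_cast
      linarith
  have hg0 : Summable fun m => g m 0 := by
    apply summable_of_ne_finset_zero (s := {0})
    intro m hm
    simp only [Finset.mem_singleton] at hm
    simp [hgdef, zero_pow hm]
  have h0t : (0:ℝ) ∈ t := by constructor <;> [linarith; linarith]
  have hxt : x ∈ t := by constructor <;> [linarith; linarith]
  -- derivative of f on t
  have hf : ∀ y ∈ t, HasDerivAt f (∑' m, g' m y) y := by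
    intro y hy
    exact hasDerivAt_tsum_of_isPreconnected hu ht h't hg hg' h0t hg0 hy
  -- the function F
  set F : ℝ → ℝ := fun y => f y * (1 - y) ^ a with hFdef
  have hFderiv : ∀ y ∈ Set.Icc 0 x, HasDerivAt F 0 y := by
    intro y hy
    have hyt : y ∈ t := ⟨by linarith [hy.1], by linarith [hy.2]⟩
    have hy1 : (0:ℝ) < 1 - y := by linarith [hy.2]
    have hy0 : 0 ≤ y := hy.1
    have hy2 : y < 1 := by linarith [hy.2]
    -- summabilities at y
    have hsg' : Summable fun m => g' m y := by
      refine Summable.of_norm_bounded hu fun m => hg' m y hyt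
    have hsg : Summable fun m => g m y := summable_bc a ha hy0 hy2
    -- shifted description of the derivative sum
    have hshift : ∀ m : ℕ, g' (m + 1) y = bc a m * (a + m) * y ^ m := by
      intro m
      rw [hg'def]
      simp only [Nat.add_sub_cancel]
      rw [bc_succ]
      have hm : (m : ℝ) + 1 ≠ 0 := by positivity
      push_cast
      field_simp
    have hsp : Summable fun m => bc a m * (a + m) * y ^ m := by
      have := (summable_nat_add_iff 1).2 hsg'
      refine this.congr fun m => ?_
      exact hshift m
    have hDy : ∑' m, g' m y = ∑' m, bc a m * (a + m) * y ^ m := by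
      rw [hsg'.tsum_eq_zero_add]
      simp only [hg'def]
      rw [show bc a 0 * ((0:ℕ) * y ^ (0 - 1)) = 0 by simp]
      rw [zero_add]
      exact tsum_congr fun m => by
        have := hshift m
        simpa only [hg'def] using this
    -- key identity : (1 - y) * D y = a * f y
    have hkey : (1 - y) * (∑' m, g' m y) = a * f y := by
      have hh : ∀ m : ℕ, g' m y * y = bc a m * (m : ℝ) * y ^ m := by
        intro m
        cases m with
        | zero => simp [hg'def]
        | succ m =>
          show bc a (m+1) * (↑(m+1) * y ^ (m + 1 - 1)) * y = bc a (m+1) * (↑(m+1) : ℝ) * y ^ (m+1)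
          simp only [Nat.add_sub_cancel]
          rw [pow_succ]
          ring
      have hsh : Summable fun m => bc a m * (m : ℝ) * y ^ m := by
        refine (hsg'.mul_right y).congr fun m => hh m
      have hyD : (∑' m, g' m y) * y = ∑' m, bc a m * (m : ℝ) * y ^ m := by
        rw [← tsum_mul_right]
        exact tsum_congr hh
      rw [sub_mul, one_mul, mul_comm y _, hyD, hDy]
      rw [← hsp.tsum_sub hsh]
      have : ∀ m : ℕ, bc a m * (a + m) * y ^ m - bc a m * (m:ℝ) * y ^ m
          = a * (bc a m * y ^ m) := by intro m; ring
      rw [tsum_congr this, tsum_mul_left]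
    -- derivative of (1-y)^a
    have hrpow : HasDerivAt (fun z : ℝ => (1 - z) ^ a) (-(a * (1 - y) ^ (a - 1))) y := by
      have h1 : HasDerivAt (fun z : ℝ => 1 - z) (-1) y := (hasDerivAt_id y).const_sub 1
      have h2 := Real.hasDerivAt_rpow_const (x := 1 - y) (p := a) (Or.inl hy1.ne')
      have := h2.comp y h1
      exact this.congr_deriv (by ring)
    have hprod := (hf y hyt).mul hrpow
    refine hprod.congr_deriv ?_
    have hsplit : (1 - y) ^ a = (1 - y) * (1 - y) ^ (a - 1) := by
      have h := Real.rpow_add hy1 1 (a - 1)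
      rw [Real.rpow_one] at h
      rw [show (1:ℝ) + (a - 1) = a by ring] at h
      exact h
    rw [hsplit]
    have : (∑' m, g' m y) * ((1-y) * (1-y) ^ (a-1)) = ((1-y) * (∑' m, g' m y)) * (1-y)^(a-1) := by
      ring
    rw [this, hkey]
    ring
  -- F is constant on [0, x]
  have hcont : ContinuousOn F (Set.Icc 0 x) := by
    intro y hy
    exact ((hFderiv y hy).continuousAt).continuousWithinAt
  have hconst := constant_of_has_deriv_right_zero hcont
    (fun y hy => ((hFderiv y (Set.mem_Icc_of_Ico hy)).hasDerivWithinAt))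
  have hFx := hconst x (Set.right_mem_Icc.2 hx0)
  -- evaluate
  have hF0 : F 0 = 1 := by
    rw [hFdef]
    simp only [sub_zero, Real.one_rpow, mul_one]
    exact tsum_bc_zero a
  rw [hF0] at hFx
  have h1x : (0:ℝ) < 1 - x := by linarith
  have hfx : f x * (1 - x) ^ a = 1 := hFx
  have hrpow_ne : (1 - x) ^ a ≠ 0 := (Real.rpow_pos_of_pos h1x a).ne'
  have : f x = ((1 - x) ^ a)⁻¹ := by
    field_simp at hfx ⊢
    linarith [hfx]
  have hfin : f x = (1 - x) ^ (-a) := by rw [Real.rpow_neg h1x.le]; exact this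
  exact hfin

end AuxBinomial

section AuxSupport

open Classical

lemma SupportedOn.entry_eq_zero {X : Set ι} {A : Op ι d} (h : SupportedOn X A)
    {i j : ι → Fin d} (hne : ¬ ∀ x ∉ X, i x = j x) : A i j = 0 := by
  obtain ⟨B, hB⟩ := h
  rw [hB, if_neg hne]

lemma SupportedOn.sub {X : Set ι} {A B : Op ι d} (hA : SupportedOn X A)
    (hB : SupportedOn X B) : SupportedOn X (A - B) := by
  obtain ⟨A', hA'⟩ := hA
  obtain ⟨B', hB'⟩ := hB
  refine ⟨A' - B', fun i j => ?_⟩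
  have : (A - B) i j = A i j - B i j := rfl
  rw [this, hA', hB']
  by_cases hc : ∀ x ∉ X, i x = j x
  · rw [if_pos hc, if_pos hc, if_pos hc]; rfl
  · rw [if_neg hc, if_neg hc, if_neg hc, sub_zero]

lemma SupportedOn.mul {X : Set ι} {A B : Op ι d} (hA : SupportedOn X A)
    (hB : SupportedOn X B) : SupportedOn X (A * B) := by
  obtain ⟨A', hA'⟩ := hA
  obtain ⟨B', hB'⟩ := hB
  refine ⟨A' * B', fun i j => ?_⟩
  rw [Matrix.mul_apply]
  by_cases hc : ∀ x ∉ X, i x = j x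
  · rw [if_pos hc, Matrix.mul_apply]
    set φ : (X → Fin d) → (ι → Fin d) := fun b x => if h : x ∈ X then b ⟨x, h⟩ else i x with hφ
    have hφinj : Function.Injective φ := by
      intro b b' hbb
      funext x
      have := congrFun hbb x.1
      simpa [hφ, x.2] using this
    have hsub : (Finset.univ.image φ) ⊆ Finset.univ := Finset.subset_univ _
    have hzero : ∀ v ∈ Finset.univ, v ∉ Finset.univ.image φ → A i v * B v j = 0 := by
      intro v _ hv
      have hAiv : A i v = 0 := by
        rw [hA']
        rw [if_neg]
        intro hcc
        apply hv
        refine Finset.mem_image.2 ⟨fun x => v x.1, Finset.mem_univ _, ?_⟩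
        funext x
        by_cases hx : x ∈ X
        · simp [hφ, hx]
        · simp [hφ, hx, (hcc x hx).symm]
      rw [hAiv, zero_mul]
    rw [← Finset.sum_subset hsub hzero, Finset.sum_image (fun b _ b' _ h => hφinj h)]
    apply Finset.sum_congr rfl
    intro b _
    have h1 : A i (φ b) = A' (fun x => i x.1) b := by
      rw [hA', if_pos]
      · congr 1
        funext x
        simp [hφ, x.2]
      · intro x hx
        simp [hφ, hx]
    have h2 : B (φ b) j = B' b (fun x => j x.1) := by
      rw [hB', if_pos]
      · congr 1
        funext x
        simp [hφ, x.2]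
      · intro x hx
        simp only [hφ, dif_neg hx]
        exact hc x hx
    rw [h1, h2]
  · rw [if_neg hc]
    apply Finset.sum_eq_zero
    intro v _
    by_cases h1 : ∀ x ∉ X, i x = v x
    · by_cases h2 : ∀ x ∉ X, v x = j x
      · exact absurd (fun x hx => (h1 x hx).trans (h2 x hx)) hc
      · rw [hB' v j, if_neg h2, mul_zero]
    · rw [hA', if_neg h1, zero_mul]

lemma SupportedOn.mono (u₀ : ι → Fin d) {X Y : Set ι} (hXY : X ⊆ Y) {A : Op ι d}
    (hA : SupportedOn X A) : SupportedOn Y A := by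
  obtain ⟨B', hB'⟩ := hA
  set ext : (Y → Fin d) → (ι → Fin d) := fun a x => if h : x ∈ Y then a ⟨x, h⟩ else u₀ x
    with hext
  refine ⟨Matrix.of (fun a b => A (ext a) (ext b)), fun i j => ?_⟩
  by_cases hc : ∀ x ∉ Y, i x = j x
  · rw [if_pos hc]
    have hofs : (Matrix.of (fun a b => A (ext a) (ext b))) (fun x : Y => i x.1) (fun x : Y => j x.1)
        = A (ext (fun x : Y => i x.1)) (ext (fun x : Y => j x.1)) := rfl
    rw [hofs]
    set i' := ext (fun x : Y => i x.1) with hi'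
    set j' := ext (fun x : Y => j x.1) with hj'
    have hiY : ∀ x (h : x ∈ Y), i' x = i x := by intro x h; simp [hi', hext, h]
    have hjY : ∀ x (h : x ∈ Y), j' x = j x := by intro x h; simp [hj', hext, h]
    have hiN : ∀ x (h : x ∉ Y), i' x = u₀ x := by intro x h; simp [hi', hext, h]
    have hjN : ∀ x (h : x ∉ Y), j' x = u₀ x := by intro x h; simp [hj', hext, h]
    rw [hB' i j, hB' i' j']
    have hcond : (∀ x ∉ X, i x = j x) ↔ (∀ x ∉ X, i' x = j' x) := by
      constructor
      · intro h x hx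
        by_cases hxY : x ∈ Y
        · rw [hiY x hxY, hjY x hxY]; exact h x hx
        · rw [hiN x hxY, hjN x hxY]
      · intro h x hx
        by_cases hxY : x ∈ Y
        · rw [← hiY x hxY, ← hjY x hxY]; exact h x hx
        · exact hc x hxY
    by_cases h : ∀ x ∉ X, i x = j x
    · rw [if_pos h, if_pos (hcond.1 h)]
      congr 1 <;> funext x <;> [skip; skip]
      · exact (hiY x.1 (hXY x.2)).symm
      · exact (hjY x.1 (hXY x.2)).symm
    · rw [if_neg h, if_neg (fun hh => h (hcond.2 hh))]
  · rw [if_neg hc]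
    push_neg at hc
    obtain ⟨x, hxY, hne⟩ := hc
    rw [hB' i j, if_neg]
    intro hh
    exact hne (hh x (fun hxX => hxY (hXY hxX)))

lemma mul_entry_of_disjoint {X Y : Set ι} {A B : Op ι d}
    {A' : Matrix (X → Fin d) (X → Fin d) ℂ} {B' : Matrix (Y → Fin d) (Y → Fin d) ℂ}
    (hA' : ∀ i j : ι → Fin d,
      A i j = if ∀ x ∉ X, i x = j x then A' (fun x => i x.1) (fun x => j x.1) else 0)
    (hB' : ∀ i j : ι → Fin d,
      B i j = if ∀ x ∉ Y, i x = j x then B' (fun x => i x.1) (fun x => j x.1) else 0)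
    (hd : ∀ x, x ∈ X → x ∉ Y) (u w : ι → Fin d) :
    (A * B) u w = if (∀ x, x ∉ X → x ∉ Y → u x = w x)
      then A' (fun x => u x.1) (fun x => w x.1) * B' (fun x => u x.1) (fun x => w x.1)
      else 0 := by
  rw [Matrix.mul_apply]
  set v₀ : ι → Fin d := fun x => if x ∈ X then w x else u x with hv₀
  rw [Finset.sum_eq_single v₀]
  · have hAu : A u v₀ = A' (fun x => u x.1) (fun x => w x.1) := by
      rw [hA', if_pos]
      · congr 1
        funext x
        simp [hv₀, x.2]
      · intro x hx
        simp [hv₀, hx]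
    have hBv : B v₀ w = if (∀ x, x ∉ X → x ∉ Y → u x = w x)
        then B' (fun x => u x.1) (fun x => w x.1) else 0 := by
      rw [hB']
      have hargs : (fun x : Y => v₀ x.1) = (fun x : Y => u x.1) := by
        funext x
        simp [hv₀, hd x.1 ∘ (fun h => h), show x.1 ∉ X from fun h => hd x.1 h x.2]
      have hcond : (∀ x ∉ Y, v₀ x = w x) ↔ (∀ x, x ∉ X → x ∉ Y → u x = w x) := by
        constructor
        · intro h x hxX hxY
          have h3 := h x hxY
          rw [hv₀] at h3
          simp only [if_neg hxX] at h3
          exact h3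
        · intro h x hxY
          by_cases hxX : x ∈ X
          · simp [hv₀, hxX]
          · rw [hv₀]; simp only [if_neg hxX]; exact h x hxX hxY
      by_cases h : ∀ x, x ∉ X → x ∉ Y → u x = w x
      · rw [if_pos (hcond.2 h), if_pos h, hargs]
      · rw [if_neg (fun hh => h (hcond.1 hh)), if_neg h]
    rw [hAu, hBv]
    by_cases h : ∀ x, x ∉ X → x ∉ Y → u x = w x
    · rw [if_pos h, if_pos h]
    · rw [if_neg h, if_neg h, mul_zero]
  · intro v _ hvne
    by_cases h1 : ∀ x ∉ X, u x = v x
    · by_cases h2 : ∀ x ∉ Y, v x = w x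
      · exfalso
        apply hvne
        funext x
        by_cases hx : x ∈ X
        · rw [hv₀]; simp only [if_pos hx]
          exact h2 x (hd x hx)
        · rw [hv₀]; simp only [if_neg hx]
          exact (h1 x hx).symm
      · rw [hB' v w, if_neg h2, mul_zero]
    · rw [hA' u v, if_neg h1, zero_mul]
  · intro h
    exact absurd (Finset.mem_univ v₀) h

lemma SupportedOn.commute_of_disjoint {X Y : Set ι} {A B : Op ι d}
    (hA : SupportedOn X A) (hB : SupportedOn Y B) (hd : ∀ x, x ∈ X → x ∉ Y) :
    A * B = B * A := by
  obtain ⟨A', hA'⟩ := hA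
  obtain ⟨B', hB'⟩ := hB
  funext u w
  have h1 := mul_entry_of_disjoint hA' hB' hd u w
  have h2 := mul_entry_of_disjoint hB' hA' (fun x hx hX => hd x hX hx) u w
  have : (A * B) u w = (B * A) u w := by
    rw [h1, h2]
    by_cases h : ∀ x, x ∉ X → x ∉ Y → u x = w x
    · rw [if_pos h, if_pos (fun x ha hb => h x hb ha), mul_comm]
    · rw [if_neg h, if_neg (fun hh => h (fun x ha hb => hh x hb ha))]
  exact this

end AuxSupport

/-- **Imaginary-time conjugation bound for local operators**: let `H = ∑_X h_X` be a
Hamiltonian on `n` qudits whose Hermitian terms are each supported on at most `k` sites,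
with `max_i ∑_{X∋i} ‖h_X‖ ≤ g`.  Then for every operator `O_S` supported on `S` and every
`β ≥ 0` with `2gkβ < 1`,
`‖e^{−βH} O_S e^{βH}‖ ≤ ‖O_S‖ (1 − 2gkβ)^{−|S|/k}`. -/
theorem imaginary_time_conjugation_bound (n d k : ℕ) (g : ℝ)
    (h : Finset (Fin n) → Op (Fin n) d)
    (hsupp : ∀ X : Finset (Fin n), SupportedOn (X : Set (Fin n)) (h X))
    (hherm : ∀ X : Finset (Fin n), (h X).IsHermitian)
    (hcard : ∀ X : Finset (Fin n), h X ≠ 0 → X.card ≤ k)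
    (hg : ∀ i : Fin n,
      ∑ X ∈ Finset.univ.filter (fun X : Finset (Fin n) => i ∈ X), opNorm (h X) ≤ g)
    (S : Finset (Fin n)) (O : Op (Fin n) d) (hO : SupportedOn (S : Set (Fin n)) O)
    (β : ℝ) (hβ : 0 ≤ β) (hsmall : 2 * g * k * β < 1) :
    opNorm (mexp ((-(β : ℂ)) • ∑ X : Finset (Fin n), h X) * O *
        mexp ((β : ℂ) • ∑ X : Finset (Fin n), h X))
      ≤ opNorm O * (1 - 2 * g * k * β) ^ (-(S.card : ℝ) / k) := by
  classical
  have hbase : (0:ℝ) < 1 - 2 * g * k * β := by linarith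
  by_cases hE : IsEmpty (Fin n → Fin d)
  · have hzero : (mexp ((-(β : ℂ)) • ∑ X : Finset (Fin n), h X) * O *
        mexp ((β : ℂ) • ∑ X : Finset (Fin n), h X)) = 0 := by
      apply Matrix.ext; intro i j; exact (hE.elim i)
    rw [hzero]
    have h0 : opNorm (0 : Op (Fin n) d) = 0 := by
      unfold opNorm; rw [map_zero, norm_zero]
    rw [h0]
    apply mul_nonneg
    · unfold opNorm; exact norm_nonneg _
    · exact Real.rpow_nonneg hbase.le _
  haveI hNE : Nonempty (Fin n → Fin d) := not_isEmpty_iff.mp hE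
  letI : NormedRing (Op (Fin n) d) := Matrix.instL2OpNormedRing
  letI : NormedAlgebra ℂ (Op (Fin n) d) := Matrix.instL2OpNormedAlgebra
  haveI : CompleteSpace (Op (Fin n) d) := FiniteDimensional.complete ℂ _
  have hop : ∀ A : Op (Fin n) d, opNorm A = ‖A‖ := fun _ => rfl
  have hmexp : ∀ A : Op (Fin n) d, mexp A = NormedSpace.exp A := fun _ => rfl
  set H : Op (Fin n) d := ∑ X : Finset (Fin n), h X with hHdef
  by_cases htriv : k = 0 ∨ n = 0
  · -- trivial commuting case
    have hXempty : ∀ X : Finset (Fin n), h X ≠ 0 → X = ∅ := by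
      intro X hX
      rcases htriv with hk | hn
      · have h1 := hcard X hX; rw [hk] at h1
        exact Finset.card_eq_zero.1 (Nat.le_zero.1 h1)
      · subst hn
        exact Finset.eq_empty_of_forall_notMem (fun x _ => (Nat.not_lt_zero _ x.isLt).elim)
    have hcomm : Commute H O := by
      rw [hHdef]
      apply Commute.sum_left
      intro X _
      by_cases hX : h X = 0
      · rw [hX]; exact Commute.zero_left O
      · have hXe := hXempty X hX
        have hdisj : ∀ x : Fin n, x ∈ (↑X : Set (Fin n)) → x ∉ (↑S : Set (Fin n)) := by
          intro x hx
          rw [hXe] at hx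
          simp at hx
        exact SupportedOn.commute_of_disjoint (hsupp X) hO hdisj
    have hc1 : Commute ((-(β:ℂ)) • H) O := hcomm.smul_left _
    have hc2 : Commute ((-(β:ℂ)) • H) ((β:ℂ) • H) := ((Commute.refl H).smul_left _).smul_right _
    have HL : mexp ((-(β:ℂ)) • H) * O * mexp ((β:ℂ) • H) = O := by
      simp only [hmexp]
      have e1 : Commute (NormedSpace.exp ((-(β:ℂ)) • H)) O := hc1.exp_left
      calc NormedSpace.exp ((-(β:ℂ)) • H) * O * NormedSpace.exp ((β:ℂ) • H)
          = O * (NormedSpace.exp ((-(β:ℂ)) • H) * NormedSpace.exp ((β:ℂ) • H)) := by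
            rw [e1.eq, mul_assoc]
        _ = O * NormedSpace.exp ((-(β:ℂ)) • H + (β:ℂ) • H) := by
            letI : NormedAlgebra ℚ (Op (Fin n) d) := .restrictScalars ℚ ℂ (Op (Fin n) d)
            rw [NormedSpace.exp_add_of_commute hc2]
        _ = O := by
            rw [neg_smul, neg_add_cancel, NormedSpace.exp_zero, mul_one]
    rw [HL]
    rcases htriv with hk | hn
    · subst hk
      norm_num [Real.one_rpow]
    · subst hn
      have hS0 : S = ∅ :=
        Finset.eq_empty_of_forall_notMem (fun x _ => (Nat.not_lt_zero _ x.isLt).elim)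
      rw [hS0]
      norm_num
  · -- main case
    push_neg at htriv
    obtain ⟨hk0, hn0⟩ := htriv
    have hkR : (0:ℝ) < (k:ℝ) := by
      exact_mod_cast Nat.pos_of_ne_zero hk0
    have i₀ : Fin n := ⟨0, Nat.pos_of_ne_zero hn0⟩
    have hgnorm : ∀ i : Fin n,
        ∑ X ∈ Finset.univ.filter (fun X : Finset (Fin n) => i ∈ X), ‖h X‖ ≤ g := fun i => hg i
    have hg0 : 0 ≤ g := by
      refine le_trans (Finset.sum_nonneg fun X _ => norm_nonneg (h X)) (hgnorm i₀)
    have u₀ : Fin n → Fin d := Classical.arbitrary _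
    -- the key iterated commutator bound
    have ITER : ∀ (m : ℕ) (T : Finset (Fin n)) (A : Op (Fin n) d), SupportedOn (↑T) A →
        ‖((rmul H - lmul H) ^ m) A‖ ≤
          ‖A‖ * ∏ j ∈ Finset.range m, (2*g*((T.card : ℝ) + (j : ℝ)*(k:ℝ))) := by
      intro m
      induction m with
      | zero => intro T A hTA; simp
      | succ m ih =>
        intro T A hTA
        have hfac0 : ∀ (c : ℕ) (j : ℕ), (0:ℝ) ≤ 2*g*((c : ℝ) + (j : ℝ)*(k:ℝ)) := by
          intro c j
          have : (0:ℝ) ≤ (c:ℝ) + (j:ℝ)*(k:ℝ) := by positivity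
          have h2g : (0:ℝ) ≤ 2*g := by linarith
          nlinarith
        set F : Finset (Finset (Fin n)) :=
          Finset.univ.filter (fun X => (X ∩ T).Nonempty ∧ h X ≠ 0) with hF
        have hDA : (rmul H - lmul H) A = ∑ X ∈ F, (A * h X - h X * A) := by
          have h1 : (rmul H - lmul H) A = A * H - H * A := rfl
          rw [h1, hHdef, Finset.mul_sum, Finset.sum_mul, ← Finset.sum_sub_distrib]
          refine (Finset.sum_subset (Finset.subset_univ F) ?_).symm
          intro X _ hX
          rw [hF] at hX
          simp only [Finset.mem_filter, Finset.mem_univ, true_and, not_and_or] at hX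
          rcases hX with hX | hX
          · have hdisj : ∀ x : Fin n, x ∈ (↑X : Set (Fin n)) → x ∉ (↑T : Set (Fin n)) := by
              intro x hx hxT
              exact hX ⟨x, Finset.mem_inter.2 ⟨hx, hxT⟩⟩
            have hcm := SupportedOn.commute_of_disjoint (hsupp X) hTA hdisj
            rw [sub_eq_zero]
            exact hcm.symm
          · rw [not_not] at hX
            rw [hX]
            simp
        have hpow : ((rmul H - lmul H) ^ (m+1)) A = ((rmul H - lmul H) ^ m) ((rmul H - lmul H) A) := by
          rw [pow_succ, ContinuousLinearMap.mul_apply]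
        rw [hpow, hDA, map_sum]
        refine le_trans (norm_sum_le _ _) ?_
        have hprodnn : (0:ℝ) ≤ ∏ j ∈ Finset.range m, (2*g*(((T.card:ℝ) + (k:ℝ)) + (j:ℝ)*(k:ℝ))) := by
          apply Finset.prod_nonneg
          intro j _
          have := hfac0 (T.card + k) j
          push_cast at this ⊢
          linarith
        have hbound : ∀ X ∈ F, ‖(((rmul H - lmul H)) ^ m) (A * h X - h X * A)‖ ≤
            (2 * ‖h X‖ * ‖A‖) * ∏ j ∈ Finset.range m, (2*g*(((T.card:ℝ) + (k:ℝ)) + (j:ℝ)*(k:ℝ))) := by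
          intro X hXF
          rw [hF, Finset.mem_filter] at hXF
          have hXT : (X ∩ T).Nonempty := hXF.2.1
          have hXne : h X ≠ 0 := hXF.2.2
          have hsub1 : (↑T : Set (Fin n)) ⊆ (↑(T ∪ X) : Set (Fin n)) :=
            Finset.coe_subset.2 Finset.subset_union_left
          have hsub2 : (↑X : Set (Fin n)) ⊆ (↑(T ∪ X) : Set (Fin n)) :=
            Finset.coe_subset.2 Finset.subset_union_right
          have hCX : SupportedOn (↑(T ∪ X) : Set (Fin n)) (A * h X - h X * A) :=
            ((hTA.mono u₀ hsub1).mul ((hsupp X).mono u₀ hsub2)).sub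
              (((hsupp X).mono u₀ hsub2).mul (hTA.mono u₀ hsub1))
          have hIH := ih (T ∪ X) _ hCX
          have hnormC : ‖A * h X - h X * A‖ ≤ 2 * ‖h X‖ * ‖A‖ := by
            calc ‖A * h X - h X * A‖ ≤ ‖A * h X‖ + ‖h X * A‖ := norm_sub_le _ _
              _ ≤ ‖A‖ * ‖h X‖ + ‖h X‖ * ‖A‖ := add_le_add (norm_mul_le _ _) (norm_mul_le _ _)
              _ = 2 * ‖h X‖ * ‖A‖ := by ring
          have hcard2 : (((T ∪ X).card : ℝ)) ≤ (T.card : ℝ) + (k:ℝ) := by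
            have h1 := Finset.card_union_le T X
            have h2 := hcard X hXne
            have h3 : (T ∪ X).card ≤ T.card + k := le_trans h1 (by omega)
            exact_mod_cast h3
          have hprodmono : ∏ j ∈ Finset.range m, (2*g*(((T ∪ X).card:ℝ) + (j:ℝ)*(k:ℝ))) ≤
              ∏ j ∈ Finset.range m, (2*g*(((T.card:ℝ) + (k:ℝ)) + (j:ℝ)*(k:ℝ))) := by
            apply Finset.prod_le_prod
            · intro j _; exact hfac0 _ j
            · intro j _
              have h2g : (0:ℝ) ≤ 2*g := by linarith
              nlinarith [mul_nonneg (mul_nonneg (by norm_num : (0:ℝ) ≤ 2) hg0)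
                (by positivity : (0:ℝ) ≤ (j:ℝ)*(k:ℝ))]
          calc ‖(((rmul H - lmul H)) ^ m) (A * h X - h X * A)‖
              ≤ ‖A * h X - h X * A‖ * ∏ j ∈ Finset.range m, (2*g*(((T ∪ X).card:ℝ) + (j:ℝ)*(k:ℝ))) := hIH
            _ ≤ ‖A * h X - h X * A‖ * ∏ j ∈ Finset.range m, (2*g*(((T.card:ℝ) + (k:ℝ)) + (j:ℝ)*(k:ℝ))) :=
                mul_le_mul_of_nonneg_left hprodmono (norm_nonneg _)
            _ ≤ (2 * ‖h X‖ * ‖A‖) * ∏ j ∈ Finset.range m, (2*g*(((T.card:ℝ) + (k:ℝ)) + (j:ℝ)*(k:ℝ))) :=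
                mul_le_mul_of_nonneg_right hnormC hprodnn
        refine le_trans (Finset.sum_le_sum hbound) ?_
        rw [← Finset.sum_mul]
        -- counting: ∑_{X ∈ F} ‖h X‖ ≤ g * T.card
        have hcount : ∑ X ∈ F, ‖h X‖ ≤ g * T.card := by
          set wfn : Finset (Fin n) → Fin n :=
            fun X => if hX : (X ∩ T).Nonempty then hX.choose else i₀ with hwfn
          have hmaps : ∀ X ∈ F, wfn X ∈ T := by
            intro X hX
            have hne : (X ∩ T).Nonempty := (Finset.mem_filter.1 hX).2.1
            have hspec := hne.choose_spec
            rw [hwfn]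
            simp only [dif_pos hne]
            exact (Finset.mem_inter.1 hspec).2
          have hfiber := Finset.sum_fiberwise_of_maps_to hmaps (fun X => ‖h X‖)
          rw [← hfiber]
          have hinner : ∀ i ∈ T, ∑ X ∈ F.filter (fun X => wfn X = i), ‖h X‖ ≤ g := by
            intro i _
            refine le_trans (Finset.sum_le_sum_of_subset_of_nonneg ?_
              (fun X _ _ => norm_nonneg _)) (hgnorm i)
            intro X hX
            rw [Finset.mem_filter] at hX
            obtain ⟨hXF, hwX⟩ := hX
            have hne : (X ∩ T).Nonempty := (Finset.mem_filter.1 hXF).2.1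
            have hspec := hne.choose_spec
            rw [Finset.mem_filter]
            refine ⟨Finset.mem_univ _, ?_⟩
            have : wfn X ∈ X := by
              rw [hwfn]; simp only [dif_pos hne]
              exact (Finset.mem_inter.1 hspec).1
            rwa [hwX] at this
          calc ∑ i ∈ T, ∑ X ∈ F.filter (fun X => wfn X = i), ‖h X‖
              ≤ ∑ _i ∈ T, g := Finset.sum_le_sum hinner
            _ = T.card * g := by rw [Finset.sum_const, nsmul_eq_mul]
            _ = g * T.card := mul_comm _ _
        have hsum2 : ∑ X ∈ F, 2 * ‖h X‖ * ‖A‖ = 2 * ‖A‖ * ∑ X ∈ F, ‖h X‖ := by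
          rw [Finset.mul_sum]
          apply Finset.sum_congr rfl
          intro X _; ring
        rw [hsum2]
        have hstep : 2 * ‖A‖ * (∑ X ∈ F, ‖h X‖) *
              ∏ j ∈ Finset.range m, (2*g*(((T.card:ℝ) + (k:ℝ)) + (j:ℝ)*(k:ℝ)))
            ≤ 2 * ‖A‖ * (g * T.card) *
              ∏ j ∈ Finset.range m, (2*g*(((T.card:ℝ) + (k:ℝ)) + (j:ℝ)*(k:ℝ))) := by
          apply mul_le_mul_of_nonneg_right _ hprodnn
          apply mul_le_mul_of_nonneg_left hcount
          positivity
        refine le_trans hstep (le_of_eq ?_)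
        rw [Finset.prod_range_succ']
        have hshift : ∀ j : ℕ, 2*g*((T.card:ℝ) + ((j+1 : ℕ):ℝ)*(k:ℝ))
            = 2*g*(((T.card:ℝ) + (k:ℝ)) + (j:ℝ)*(k:ℝ)) := by
          intro j; push_cast; ring
        rw [Finset.prod_congr rfl (fun j _ => hshift j)]
        push_cast
        ring
    -- assemble the series bound
    have hx0 : (0:ℝ) ≤ 2*g*(k:ℝ)*β := by positivity
    set a : ℝ := (S.card : ℝ) / (k:ℝ) with hadef
    have ha0 : 0 ≤ a := by positivity
    have hbsum := hasSum_bc a ha0 hx0 hsmall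
    have hw : Summable (fun m : ℕ => ‖O‖ * (bc a m * (2*g*(k:ℝ)*β)^m)) :=
      (hbsum.summable).mul_left _
    have hkalg : ∀ m : ℕ, (m.factorial:ℝ)⁻¹ * (β^m *
          (‖O‖ * ∏ j ∈ Finset.range m, (2*g*((S.card:ℝ) + (j:ℝ)*(k:ℝ)))))
        = ‖O‖ * (bc a m * (2*g*(k:ℝ)*β)^m) := by
      intro m
      have hfact : ∀ j : ℕ, 2*g*((S.card:ℝ) + (j:ℝ)*(k:ℝ))*β = (2*g*(k:ℝ)*β) * (a + j) := by
        intro j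
        have hsk : (S.card:ℝ) + (j:ℝ)*(k:ℝ) = (k:ℝ)*(a+j) := by
          rw [hadef]
          field_simp
        rw [hsk]; ring
      have hmain : ∀ M : ℕ, β^M * ∏ j ∈ Finset.range M, (2*g*((S.card:ℝ) + (j:ℝ)*(k:ℝ)))
          = (2*g*(k:ℝ)*β)^M * ∏ j ∈ Finset.range M, (a + (j:ℝ)) := by
        intro M
        induction M with
        | zero => simp
        | succ M ihm =>
          rw [Finset.prod_range_succ, Finset.prod_range_succ, pow_succ, pow_succ]
          calc β ^ M * β * ((∏ j ∈ Finset.range M, (2*g*((S.card:ℝ) + (j:ℝ)*(k:ℝ)))) *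
                (2*g*((S.card:ℝ) + (M:ℝ)*(k:ℝ))))
              = (β ^ M * ∏ j ∈ Finset.range M, (2*g*((S.card:ℝ) + (j:ℝ)*(k:ℝ)))) *
                (2*g*((S.card:ℝ) + (M:ℝ)*(k:ℝ)) * β) := by ring
            _ = ((2*g*(k:ℝ)*β)^M * ∏ j ∈ Finset.range M, (a + (j:ℝ))) *
                ((2*g*(k:ℝ)*β) * (a + (M:ℝ))) := by rw [ihm, hfact M]
            _ = (2*g*(k:ℝ)*β)^M * (2*g*(k:ℝ)*β) *
                ((∏ j ∈ Finset.range M, (a + (j:ℝ))) * (a + (M:ℝ))) := by ring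
      have hmain := hmain m
      rw [bc]
      rw [show (m.factorial:ℝ)⁻¹ * (β^m *
          (‖O‖ * ∏ j ∈ Finset.range m, (2*g*((S.card:ℝ) + (j:ℝ)*(k:ℝ)))))
        = ‖O‖ * ((β^m * ∏ j ∈ Finset.range m, (2*g*((S.card:ℝ) + (j:ℝ)*(k:ℝ)))) *
            (m.factorial:ℝ)⁻¹) by ring]
      rw [hmain]
      rw [div_eq_mul_inv]
      ring
    have hterm : ∀ m : ℕ, ‖((m.factorial : ℂ))⁻¹ • ((β:ℂ)^m • (((rmul H - lmul H))^m) O)‖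
        ≤ ‖O‖ * (bc a m * (2*g*(k:ℝ)*β)^m) := by
      intro m
      rw [norm_smul, norm_smul]
      have h1 : ‖((m.factorial : ℂ))⁻¹‖ = (m.factorial:ℝ)⁻¹ := by
        rw [norm_inv]
        norm_num
      have h2 : ‖((β:ℂ))^m‖ = β^m := by
        rw [norm_pow, Complex.norm_real, Real.norm_eq_abs, abs_of_nonneg hβ]
      rw [h1, h2]
      rw [← hkalg m]
      have h3 := ITER m S O hO
      have h4 : β^m * ‖(((rmul H - lmul H))^m) O‖
          ≤ β^m * (‖O‖ * ∏ j ∈ Finset.range m, (2*g*((S.card:ℝ) + (j:ℝ)*(k:ℝ)))) :=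
        mul_le_mul_of_nonneg_left h3 (pow_nonneg hβ m)
      have h5 : (m.factorial:ℝ)⁻¹ * (β^m * ‖(((rmul H - lmul H))^m) O‖)
          ≤ (m.factorial:ℝ)⁻¹ * (β^m *
              (‖O‖ * ∏ j ∈ Finset.range m, (2*g*((S.card:ℝ) + (j:ℝ)*(k:ℝ))))) := by
        apply mul_le_mul_of_nonneg_left h4
        positivity
      exact h5
    have hv : Summable (fun m : ℕ =>
        ((m.factorial : ℂ))⁻¹ • ((β:ℂ)^m • ((rmul H - lmul H)^m) O)) :=
      Summable.of_norm_bounded hw hterm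
    have hnv : Summable (fun m : ℕ =>
        ‖((m.factorial : ℂ))⁻¹ • ((β:ℂ)^m • ((rmul H - lmul H)^m) O)‖) :=
      Summable.of_nonneg_of_le (fun _ => norm_nonneg _) hterm hw
    simp only [hop, hmexp]
    rw [exp_conj_eq H O β]
    calc ‖∑' m : ℕ, ((m.factorial : ℂ))⁻¹ • ((β:ℂ)^m • ((rmul H - lmul H)^m) O)‖
        ≤ ∑' m : ℕ, ‖((m.factorial : ℂ))⁻¹ • ((β:ℂ)^m • ((rmul H - lmul H)^m) O)‖ :=
          norm_tsum_le_tsum_norm hnv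
      _ ≤ ∑' m : ℕ, ‖O‖ * (bc a m * (2*g*(k:ℝ)*β)^m) := Summable.tsum_le_tsum hterm hnv hw
      _ = ‖O‖ * ∑' m : ℕ, bc a m * (2*g*(k:ℝ)*β)^m := tsum_mul_left
      _ = ‖O‖ * (1 - 2*g*(k:ℝ)*β) ^ (-a) := by rw [hbsum.tsum_eq]
      _ = ‖O‖ * (1 - 2*g*(k:ℝ)*β) ^ (-(S.card:ℝ)/(k:ℝ)) := by rw [neg_div, hadef]

end Paper
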